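/- Let K = k(α) and K' = k(β) be Artin-Schreier extensions of a field k of characteristic p, with α^p − α = D and β^p − β = D'. Then K = K' if and only if there exist x ∈ F_p^* and B ∈ k with D' = xD + (B^p − B) (equivalently β = xα + B). -/

import Mathlib

open Polynomial IntermediateField
set_option maxHeartbeats 1000000
set_option synthInstance.maxHeartbeats 400000



lemma as_monic {k : Type*} [Field k] {p : ℕ} (hp : p.Prime) (D : k) :
    (X ^ p - X - C D).Monic := by
  have h1 : ((X : k[X]) + C D).degree < (p : ℕ) := by
    apply lt_of_le_of_lt (degree_add_le _ _)
    simp only [degree_X, degree_C_le, max_lt_iff]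
    constructor
    · exact_mod_cast hp.one_lt
    · exact lt_of_le_of_lt degree_C_le (by exact_mod_cast hp.pos)
  have h2 := monic_X_pow_sub (p := (X : k[X]) + C D) (n := p) h1
  have : (X : k[X]) ^ p - (X + C D) = X ^ p - X - C D := by ring
  rwa [this] at h2

lemma zmod_prod_X_sub_C {p : ℕ} [NeZero p] (hp : p.Prime) :
    ∏ i : ZMod p, (X - C i) = X ^ p - X := by
  haveI := Fact.mk hp
  have hcard : Fintype.card (ZMod p) = p := ZMod.card p
  have hroots : (X ^ p - X : (ZMod p)[X]).roots = Finset.univ.val := by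
    have := FiniteField.roots_X_pow_card_sub_X (ZMod p)
    rwa [hcard] at this
  have hdvd : (∏ i : ZMod p, (X - C i)) ∣ (X ^ p - X : (ZMod p)[X]) := by
    have h := prod_multiset_X_sub_C_dvd (X ^ p - X : (ZMod p)[X])
    rw [hroots] at h
    rw [Finset.prod_eq_multiset_prod]
    exact h
  have hmon : (∏ i : ZMod p, (X - C i) : (ZMod p)[X]).Monic :=
    monic_prod_of_monic _ _ fun i _ => monic_X_sub_C i
  have hmon2 : ((X : (ZMod p)[X]) ^ p - X).Monic := by
    have h1 : (X : (ZMod p)[X]).degree < (p : ℕ) := by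
      rw [degree_X]; exact_mod_cast hp.one_lt
    exact monic_X_pow_sub h1
  have hdeg2 : ((X : (ZMod p)[X]) ^ p - X).natDegree = p := by
    rw [natDegree_sub_eq_left_of_natDegree_lt] <;>
      simp [natDegree_X_pow, natDegree_X, hp.one_lt]
  have hdeg : ((X : (ZMod p)[X]) ^ p - X).natDegree ≤
      (∏ i : ZMod p, (X - C i) : (ZMod p)[X]).natDegree := by
    rw [natDegree_prod _ _ (fun i _ => X_sub_C_ne_zero i), hdeg2]
    simp [natDegree_X_sub_C, hcard]
  exact (eq_of_monic_of_dvd_of_natDegree_le hmon hmon2 hdvd hdeg).symm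



lemma frob_fixed {p : ℕ} (hp : p.Prime) {L : Type*} [Field L] [CharP L p]
    (x : L) (hx : x ^ p = x) : ∃ i : ZMod p, x = ZMod.castHom (dvd_refl p) L i := by
  haveI : NeZero p := ⟨hp.ne_zero⟩
  set φ := ZMod.castHom (dvd_refl p) L with hφ
  have h0 : (∏ i : ZMod p, (x - φ i)) = x ^ p - x := by
    have h := congrArg (fun q : (ZMod p)[X] => Polynomial.eval x (q.map φ))
      (zmod_prod_X_sub_C hp)
    simpa [Polynomial.map_prod, Polynomial.eval_prod] using h
  rw [hx, sub_self] at h0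
  obtain ⟨i, -, hi⟩ := Finset.prod_eq_zero_iff.mp h0
  exact ⟨i, sub_eq_zero.mp hi⟩

lemma as_natDegree {k : Type*} [Field k] {p : ℕ} (hp : p.Prime) (D : k) :
    (X ^ p - X - C D).natDegree = p := by
  have h1 : ((X : k[X]) + C D).natDegree < (X ^ p - X - C D + (X + C D)).natDegree := by
    have : (X : k[X]) ^ p - X - C D + (X + C D) = X ^ p := by ring
    rw [this, natDegree_X_pow]
    apply lt_of_le_of_lt (natDegree_add_le _ _)
    simp [hp.one_lt]
  have h2 : (X : k[X]) ^ p - X - C D = X ^ p - (X + C D) := by ring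
  rw [h2, natDegree_sub_eq_left_of_natDegree_lt, natDegree_X_pow]
  · rw [natDegree_X_pow]
    apply lt_of_le_of_lt (natDegree_add_le _ _)
    simp [hp.one_lt]



lemma as_minpoly {p : ℕ} (hp : p.Prime) {k : Type*} [Field k] [CharP k p]
    {D : k} (hD : ¬∃ y : k, y ^ p - y = D) {α : AlgebraicClosure k}
    (hα : α ^ p - α = algebraMap k (AlgebraicClosure k) D) :
    minpoly k α = X ^ p - X - C D := by
  set u := algebraMap k (AlgebraicClosure k) with hu
  haveI : CharP (AlgebraicClosure k) p := charP_of_injective_algebraMap u.injective p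
  set f : k[X] := X ^ p - X - C D with hf
  haveI := Fact.mk hp
  have hfmon : f.Monic := as_monic hp D
  have haev : (Polynomial.aeval α) f = 0 := by
    simp only [hf, map_sub, map_pow, aeval_X, aeval_C]
    rw [← hα]; ring
  have hint : IsIntegral k α := ⟨f, hfmon, by rwa [Polynomial.aeval_def] at haev⟩
  set m := minpoly k α with hm
  have hdvd : m ∣ f := minpoly.dvd k α haev
  -- degree of m is p
  have hdeg : m.natDegree = p := by
    rcases lt_or_ge m.natDegree p with hlt | hge
    · exfalso
      have hmmon : m.Monic := minpoly.monic hint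
      set mm := m.map u with hmm
      have hsplit : Splits mm :=
        IsAlgClosed.splits mm
      have hcard : mm.roots.card = m.natDegree := by
        rw [← (IsAlgClosed.splits mm).natDegree_eq_card_roots, hmm, natDegree_map]
      have hsum : mm.roots.sum = -mm.nextCoeff := by
        have := hsplit.nextCoeff_eq_neg_sum_roots_of_monic (hmmon.map u)
        rw [this, neg_neg]
      -- each root is α + (prime field element)
      set S := u.fieldRange with hS
      have hroot_mem : ∀ r ∈ mm.roots, r - α ∈ S := by
        intro r hr
        have hrr : (Polynomial.aeval r) m = 0 := by
          have := isRoot_of_mem_roots hr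
          rwa [hmm, IsRoot.def, Polynomial.eval_map, ← Polynomial.aeval_def] at this
        have hrf : (Polynomial.aeval r) f = 0 := by
          obtain ⟨q, hq⟩ := hdvd
          rw [hq, map_mul, hrr, zero_mul]
        have hrp : r ^ p - r = u D := by
          simp only [hf, map_sub, map_pow, aeval_X, aeval_C] at hrf
          rw [sub_sub, sub_eq_zero] at hrf; rw [hrf]; ring
        have hfix : (r - α) ^ p = r - α := by
          rw [sub_pow_char]
          have h1 : r ^ p = r + u D := by rw [← hrp]; ring
          have h2 : α ^ p = α + u D := by rw [← hα]; ring
          rw [h1, h2]; ring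
        obtain ⟨i, hi⟩ := frob_fixed hp _ hfix
        refine ⟨ZMod.castHom (dvd_refl p) k i, ?_⟩
        rw [hi]
        exact DFunLike.congr_fun (RingHom.ext_zmod (u.comp (ZMod.castHom (dvd_refl p) k))
          (ZMod.castHom (dvd_refl p) (AlgebraicClosure k))) i
      -- sum of roots
      have hsum_mem : mm.roots.sum - mm.roots.card • α ∈ S := by
        have he : mm.roots.sum - mm.roots.card • α
            = (mm.roots.map (fun r => r - α)).sum := by
          rw [Multiset.sum_map_sub]
          simp [Multiset.map_id']
        rw [he]
        apply multiset_sum_mem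
        intro x hx
        obtain ⟨r, hr, rfl⟩ := Multiset.mem_map.mp hx
        exact hroot_mem r hr
      have hnext : mm.nextCoeff ∈ S := by
        rw [hmm, nextCoeff_map u.injective]
        exact ⟨m.nextCoeff, rfl⟩
      have hcardsmul : (mm.roots.card • α : AlgebraicClosure k) ∈ S := by
        have heq : mm.roots.card • α = -mm.nextCoeff - (mm.roots.sum - mm.roots.card • α) := by
          rw [← hsum]; ring
        rw [heq]
        exact Subfield.sub_mem _ (Subfield.neg_mem _ hnext) hsum_mem
      have hd0 : 0 < m.natDegree := minpoly.natDegree_pos hint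
      have hcast : ((m.natDegree : AlgebraicClosure k)) ≠ 0 := by
        rw [Ne, CharP.cast_eq_zero_iff (AlgebraicClosure k) p]
        exact Nat.not_dvd_of_pos_of_lt hd0 hlt
      have hαmem : α ∈ S := by
        have h1 : ((m.natDegree : AlgebraicClosure k))⁻¹ * (mm.roots.card • α) = α := by
          rw [hcard, nsmul_eq_mul, ← mul_assoc, inv_mul_cancel₀ hcast, one_mul]
        rw [← h1]
        exact Subfield.mul_mem _ (Subfield.inv_mem _ (by exact ⟨m.natDegree, by push_cast; rfl⟩))
          hcardsmul
      obtain ⟨y, hy⟩ := hαmem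
      apply hD
      refine ⟨y, u.injective ?_⟩
      rw [map_sub, map_pow, hy, hα]
    · have hle : m.natDegree ≤ p := by
        have := Polynomial.natDegree_le_of_dvd hdvd hfmon.ne_zero
        rwa [as_natDegree hp D] at this
      omega
  exact (eq_of_monic_of_dvd_of_natDegree_le (minpoly.monic hint) hfmon hdvd
    (by rw [← hm, hdeg, as_natDegree hp D])).symm

set_option maxHeartbeats 1000000
set_option synthInstance.maxHeartbeats 400000


/-- Two Artin-Schreier extensions `k(α)` and `k(β)` (inside a fixed algebraic
closure), with `α^p - α = D` and `β^p - β = D'` , coincide iff there are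
`x ∈ 𝔽_p^*` and `B ∈ k` with `D' = x·D + (B^p - B)`. -/
theorem artin_schreier_equal_iff
    (p : ℕ) (hp : p.Prime) (k : Type*) [Field k] [CharP k p]
    (D D' : k) (hD : ¬∃ y : k, y ^ p - y = D) (hD' : ¬∃ y : k, y ^ p - y = D')
    (α β : AlgebraicClosure k)
    (hα : α ^ p - α = algebraMap k (AlgebraicClosure k) D)
    (hβ : β ^ p - β = algebraMap k (AlgebraicClosure k) D') :
    IntermediateField.adjoin k {α} = IntermediateField.adjoin k {β} ↔
      ∃ x : ZMod p, x ≠ 0 ∧ ∃ B : k, D' = (x.val : k) * D + (B ^ p - B) := by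
  haveI := Fact.mk hp
  haveI : NeZero p := ⟨hp.ne_zero⟩
  set u := algebraMap k (AlgebraicClosure k) with hu
  haveI : CharP (AlgebraicClosure k) p := charP_of_injective_algebraMap u.injective p
  -- the cast from k's prime field
  set ck : ZMod p →+* k := ZMod.castHom (dvd_refl p) k with hck
  have hval : ∀ c : ZMod p, (c.val : k) = ck c := by
    intro c
    rw [hck, ZMod.castHom_apply, ZMod.natCast_val]
  have hckpow : ∀ c : ZMod p, (ck c) ^ p = ck c := by
    intro c
    rw [← map_pow, ZMod.pow_card]
  constructor
  · -- forward
    intro h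
    have hβmem : β ∈ adjoin k {α} := by
      rw [h]; exact mem_adjoin_simple_self k β
    have hint : IsIntegral k α := by
      refine ⟨X ^ p - X - C D, as_monic hp D, ?_⟩
      rw [← Polynomial.aeval_def]
      simp only [map_sub, map_pow, aeval_X, aeval_C, ← hu, ← hα]; ring
    haveI : FiniteDimensional k (adjoin k {α}) := adjoin.finiteDimensional hint
    haveI : CharP (adjoin k {α}) p :=
      charP_of_injective_algebraMap (algebraMap k (adjoin k {α})).injective p
    set K := adjoin k {α} with hK
    set A : K := AdjoinSimple.gen k α with hA
    have hcoeA : (algebraMap K (AlgebraicClosure k)) A = α := AdjoinSimple.algebraMap_gen k α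
    have hKinj := (algebraMap K (AlgebraicClosure k)).injective
    have htow : ∀ c : k, algebraMap K (AlgebraicClosure k) (algebraMap k K c) = u c := by
      intro c
      rw [hu, IsScalarTower.algebraMap_apply k K (AlgebraicClosure k)]
    have hAp : A ^ p - A = algebraMap k K D := by
      apply hKinj
      rw [map_sub, map_pow, hcoeA, htow, hα]
    set pb := adjoin.powerBasis hint with hpb
    have hpbgen : pb.gen = A := rfl
    have hminA : minpoly k pb.gen = X ^ p - X - C D := by
      rw [hpbgen, hA, minpoly_gen, as_minpoly hp hD hα]
    have hdim : pb.dim = p := by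
      have := pb.natDegree_minpolyGen
      rw [pb.minpolyGen_eq, hminA, as_natDegree hp D] at this
      omega
    have hroot : (Polynomial.aeval (A + 1)) (minpoly k pb.gen) = 0 := by
      rw [hminA]
      simp only [map_sub, map_pow, map_add, aeval_X, aeval_C, map_one]
      rw [add_pow_char, one_pow]
      have : A ^ p = A + algebraMap k K D := by rw [← hAp]; ring
      rw [this]; ring
    set σ : K →ₐ[k] K := pb.lift (A + 1) hroot with hσ
    have hσA : σ A = A + 1 := pb.lift_gen _ _
    set βK : K := ⟨β, hβmem⟩ with hβK
    have hcoeβ : (algebraMap K (AlgebraicClosure k)) βK = β := rfl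
    have hβKp : βK ^ p - βK = algebraMap k K D' := by
      apply hKinj
      rw [map_sub, map_pow, hcoeβ, htow, hβ]
    have hσβp : (σ βK) ^ p - σ βK = algebraMap k K D' := by
      rw [← map_pow, ← map_sub, hβKp, AlgHom.commutes]
    have hδ : (σ βK - βK) ^ p = σ βK - βK := by
      rw [sub_pow_char]
      have h1 : (σ βK) ^ p = σ βK + algebraMap k K D' := by rw [← hσβp]; ring
      have h2 : βK ^ p = βK + algebraMap k K D' := by rw [← hβKp]; ring
      rw [h1, h2]; ring
    obtain ⟨c, hc⟩ := frob_fixed hp _ hδ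
    have hcast : ZMod.castHom (dvd_refl p) K c = algebraMap k K (ck c) :=
      DFunLike.congr_fun (RingHom.ext_zmod (ZMod.castHom (dvd_refl p) K)
        ((algebraMap k K).comp ck)) c
    set γ : K := βK - algebraMap k K (ck c) * A with hγ
    have hσγ : σ γ = γ := by
      rw [hγ, map_sub, map_mul, AlgHom.commutes, hσA]
      have hσβ : σ βK = βK + algebraMap k K (ck c) := by
        rw [← hcast, ← hc]; ring
      rw [hσβ]; ring
    -- γ is in the base field
    have hγbase : ∃ B0 : k, γ = algebraMap k K B0 := by
      have hγint : IsIntegral k γ := IsIntegral.of_finite k γ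
      have hfr : Module.finrank k K = p := by rw [pb.finrank, hdim]
      have hdvd : (minpoly k γ).natDegree ∣ p := by
        rw [← hfr]; exact minpoly.degree_dvd hγint
      rcases (hp.eq_one_or_self_of_dvd _ hdvd) with h1 | hpp
      · have hmo := minpoly.monic hγint
        have hform := Polynomial.Monic.eq_X_add_C hmo h1
        refine ⟨-((minpoly k γ).coeff 0), ?_⟩
        have := minpoly.aeval k γ
        rw [hform] at this
        simp only [map_add, aeval_X, aeval_C] at this
        rw [map_neg]; linear_combination this
      · exfalso
        have hadj : Algebra.adjoin k {γ} = ⊤ := by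
          set pbγ := Algebra.adjoin.powerBasis hγint with hpbγ
          have hfr2 : Module.finrank k (Algebra.adjoin k {γ}) = p := by
            rw [pbγ.finrank]
            show (minpoly k γ).natDegree = p
            exact hpp
          have : Subalgebra.toSubmodule (Algebra.adjoin k {γ}) = ⊤ := by
            apply Submodule.eq_top_of_finrank_eq
            rw [← hfr] at hfr2
            exact hfr2
          rwa [Algebra.toSubmodule_eq_top] at this
        have hAmem : A ∈ Algebra.adjoin k {γ} := by rw [hadj]; trivial
        rw [Algebra.adjoin_singleton_eq_range_aeval] at hAmem
        obtain ⟨q, hq⟩ := hAmem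
        have hq' : (Polynomial.aeval γ) q = A := hq
        have hcomm := Polynomial.aeval_algHom_apply σ γ q
        rw [hσγ, hq'] at hcomm
        rw [hσA] at hcomm
        exact one_ne_zero (left_eq_add.mp hcomm)
    obtain ⟨B0, hB0⟩ := hγbase
    -- translate to the closure
    have hβeq : β = u (ck c) * α + u B0 := by
      have : βK = algebraMap k K (ck c) * A + algebraMap k K B0 := by
        rw [← hB0, hγ]; ring
      have := congrArg (algebraMap K (AlgebraicClosure k)) this
      rwa [hcoeβ, map_add, map_mul, htow, htow, hcoeA] at this
    have hkey : D' = ck c * D + (B0 ^ p - B0) := by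
      apply u.injective
      rw [← hβ, hβeq]
      rw [add_pow_char, mul_pow, ← map_pow, ← map_pow, ZMod.pow_card]
      rw [map_add, map_mul, map_sub, map_pow]
      have h2 : α ^ p = α + u D := by rw [← hα]; ring
      rw [h2]; ring
    refine ⟨c, ?_, B0, ?_⟩
    · intro hc0
      apply hD'
      refine ⟨B0, ?_⟩
      rw [hkey, hc0, map_zero, zero_mul, zero_add]
    · rw [hval]; exact hkey
  · -- backward
    rintro ⟨x, hx, B, hxB⟩
    have hxk : ck x ≠ 0 := fun h0 => hx (ck.injective (by rw [h0, map_zero]))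
    set β' := u (ck x) * α + u B with hβ'
    have hβ'p : β' ^ p - β' = u D' := by
      rw [hβ', add_pow_char, mul_pow, ← map_pow, ← map_pow, ZMod.pow_card]
      have h2 : α ^ p = α + u D := by rw [← hα]; ring
      rw [h2, hxB, hval]
      push_cast [map_add, map_mul, map_sub, map_pow]
      ring
    have hδ : (β - β') ^ p = β - β' := by
      rw [sub_pow_char]
      have h1 : β ^ p = β + u D' := by rw [← hβ]; ring
      have h2 : β' ^ p = β' + u D' := by rw [← hβ'p]; ring
      rw [h1, h2]; ring
    obtain ⟨i, hi⟩ := frob_fixed hp _ hδ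
    have hcast : ZMod.castHom (dvd_refl p) (AlgebraicClosure k) i = u (ck i) :=
      DFunLike.congr_fun (RingHom.ext_zmod (ZMod.castHom (dvd_refl p) (AlgebraicClosure k))
        (u.comp ck)) i
    set w : k := B + ck i with hw
    have hβw : β = u (ck x) * α + u w := by
      rw [hw, map_add]
      have : β = β' + u (ck i) := by rw [← hcast, ← hi]; ring
      rw [this, hβ']; ring
    apply le_antisymm
    · rw [adjoin_le_iff, Set.singleton_subset_iff]
      -- α ∈ adjoin k {β}
      have hαeq : α = u ((ck x)⁻¹) * (β - u w) := by
        have hux : u (ck x) ≠ 0 := fun h0 => hxk (u.injective (by rw [h0, map_zero]))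
        rw [hβw, map_inv₀]
        field_simp
        ring
      rw [hαeq]
      exact mul_mem (IntermediateField.algebraMap_mem _ _)
        (sub_mem (mem_adjoin_simple_self k β) (IntermediateField.algebraMap_mem _ _))
    · rw [adjoin_le_iff, Set.singleton_subset_iff]
      rw [hβw]
      exact add_mem (mul_mem (IntermediateField.algebraMap_mem _ _) (mem_adjoin_simple_self k α))
        (IntermediateField.algebraMap_mem _ _)
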